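/- Let G be a finite group and H a normal subgroup. Then cp(G) ≤ cp(H) · cp(G/H). -/
import Mathlib

open Finset

private lemma nat_card_sigma {ι : Type*} [Fintype ι] (f : ι → Type*) [∀ i, Finite (f i)] :
    Nat.card (Σ i, f i) = ∑ i, Nat.card (f i) := by
  letI : ∀ i, Fintype (f i) := fun i => Fintype.ofFinite _
  rw [Nat.card_eq_fintype_card, Fintype.card_sigma]
  exact Finset.sum_congr rfl fun i _ => (Nat.card_eq_fintype_card (α := f i)).symm

/-- Commuting elements in a coset are at most those in the subgroup. -/
private lemma coset_card_le {G : Type*} [Group G] [Finite G] (H : Subgroup G) [H.Normal]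
    (P : Prop) (x : G) (q : G ⧸ H) :
    Nat.card {y : G // P ∧ (↑y : G ⧸ H) = q ∧ Commute x y} ≤
      Nat.card {y : G // P ∧ (↑y : G ⧸ H) = 1 ∧ Commute x y} := by
  by_cases hne : Nonempty {y : G // P ∧ (↑y : G ⧸ H) = q ∧ Commute x y}
  · obtain ⟨c, hP, hcq, hcx⟩ := hne
    apply Nat.card_le_card_of_injective
      (f := fun y => ⟨c⁻¹ * y.1, hP, by simp [y.2.2.1, hcq], (hcx.inv_right).mul_right y.2.2.2⟩)
    intro a b hab
    exact Subtype.ext (mul_left_cancel (Subtype.ext_iff.1 hab))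
  · haveI : IsEmpty {y : G // P ∧ (↑y : G ⧸ H) = q ∧ Commute x y} := not_nonempty_iff.1 hne
    rw [Nat.card_of_isEmpty]
    exact Nat.zero_le _

private noncomputable def T {G : Type*} [Group G] (H : Subgroup G) [H.Normal] (a b : G ⧸ H) : ℕ :=
  Nat.card {p : G × G // (↑p.1 : G ⧸ H) = a ∧ (↑p.2 : G ⧸ H) = b ∧ Commute p.1 p.2}

private lemma T_swap {G : Type*} [Group G] (H : Subgroup G) [H.Normal]
    (a b : G ⧸ H) : T H a b = T H b a := by
  refine Nat.card_congr
    { toFun := fun p => ⟨(p.1.2, p.1.1), p.2.2.1, p.2.1, p.2.2.2.symm⟩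
      invFun := fun p => ⟨(p.1.2, p.1.1), p.2.2.1, p.2.1, p.2.2.2.symm⟩
      left_inv := fun p => rfl
      right_inv := fun p => rfl }

private lemma T_le_right_one {G : Type*} [Group G] [Finite G] (H : Subgroup G) [H.Normal]
    (a b : G ⧸ H) : T H a b ≤ T H a 1 := by
  have : Fintype G := Fintype.ofFinite G
  unfold T
  rw [Nat.card_congr (Equiv.subtypeProdEquivSigmaSubtype
        fun x y : G => (↑x : G ⧸ H) = a ∧ (↑y : G ⧸ H) = b ∧ Commute x y),
      Nat.card_congr (Equiv.subtypeProdEquivSigmaSubtype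
        fun x y : G => (↑x : G ⧸ H) = a ∧ (↑y : G ⧸ H) = 1 ∧ Commute x y),
      nat_card_sigma, nat_card_sigma]
  exact Finset.sum_le_sum fun x _ => coset_card_le H _ x b

private lemma T_le_one_one {G : Type*} [Group G] [Finite G] (H : Subgroup G) [H.Normal]
    (a b : G ⧸ H) : T H a b ≤ T H 1 1 :=
  (T_le_right_one H a b).trans ((T_swap H a 1).le.trans (T_le_right_one H 1 a))

private lemma T_one_one_eq {G : Type*} [Group G] (H : Subgroup G) [H.Normal] :
    T H 1 1 = Nat.card {p : H × H // Commute p.1 p.2} := by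
  refine Nat.card_congr
    { toFun := fun p => ⟨(⟨p.1.1, (QuotientGroup.eq_one_iff _).1 p.2.1⟩,
        ⟨p.1.2, (QuotientGroup.eq_one_iff _).1 p.2.2.1⟩), Subtype.ext p.2.2.2⟩
      invFun := fun p => ⟨((p.1.1 : G), (p.1.2 : G)),
        (QuotientGroup.eq_one_iff _).2 p.1.1.2, (QuotientGroup.eq_one_iff _).2 p.1.2.2,
        congrArg Subtype.val p.2⟩
      left_inv := fun p => rfl
      right_inv := fun p => rfl }

private lemma T_eq_zero {G : Type*} [Group G] (H : Subgroup G) [H.Normal]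
    {a b : G ⧸ H} (hab : ¬ Commute a b) : T H a b = 0 := by
  haveI : IsEmpty {p : G × G // (↑p.1 : G ⧸ H) = a ∧ (↑p.2 : G ⧸ H) = b ∧ Commute p.1 p.2} := by
    refine ⟨fun p => hab ?_⟩
    obtain ⟨⟨x, y⟩, hx, hy, hxy⟩ := p
    subst hx; subst hy
    exact congrArg (QuotientGroup.mk (s := H)) hxy
  exact Nat.card_of_isEmpty

theorem commProb_le_mul_quotient (G : Type*) [Group G] [Finite G]
    (H : Subgroup G) [H.Normal] :
    commProb G ≤ commProb H * commProb (G ⧸ H) := by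
  classical
  have instG : Fintype G := Fintype.ofFinite G
  have instQ : Fintype (G ⧸ H) := Fintype.ofFinite _
  set cH := Nat.card {p : H × H // Commute p.1 p.2} with hcH
  have key : Nat.card {p : G × G // Commute p.1 p.2} ≤
      cH * Nat.card {p : (G ⧸ H) × (G ⧸ H) // Commute p.1 p.2} := by
    have hdecomp : Nat.card {p : G × G // Commute p.1 p.2} =
        ∑ q : (G ⧸ H) × (G ⧸ H), T H q.1 q.2 := by
      rw [Nat.card_congr (Equiv.sigmaFiberEquiv
        (fun p : {p : G × G // Commute p.1 p.2} =>
          ((↑p.1.1 : G ⧸ H), (↑p.1.2 : G ⧸ H)))).symm, nat_card_sigma]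
      refine Finset.sum_congr rfl fun q _ => Nat.card_congr
        { toFun := fun p => ⟨p.1.1, congrArg Prod.fst p.2, congrArg Prod.snd p.2, p.1.2⟩
          invFun := fun p => ⟨⟨p.1, p.2.2.2⟩, Prod.ext p.2.1 p.2.2.1⟩
          left_inv := fun p => rfl
          right_inv := fun p => rfl }
    rw [hdecomp]
    calc ∑ q : (G ⧸ H) × (G ⧸ H), T H q.1 q.2
        ≤ ∑ q : (G ⧸ H) × (G ⧸ H), (if Commute q.1 q.2 then cH else 0) := by
          refine Finset.sum_le_sum fun q _ => ?_
          by_cases hq : Commute q.1 q.2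
          · rw [if_pos hq, hcH, ← T_one_one_eq H]
            exact T_le_one_one H q.1 q.2
          · rw [if_neg hq, T_eq_zero H hq]
      _ = #(univ.filter fun q : (G ⧸ H) × (G ⧸ H) => Commute q.1 q.2) * cH := by
          rw [Finset.sum_ite, Finset.sum_const_zero, add_zero, Finset.sum_const, smul_eq_mul]
      _ = cH * Nat.card {p : (G ⧸ H) × (G ⧸ H) // Commute p.1 p.2} := by
          rw [Nat.card_eq_fintype_card, Fintype.card_subtype, mul_comm]
  rw [commProb_def, commProb_def, commProb_def]
  have hG : (Nat.card G : ℚ) = (Nat.card (G ⧸ H) : ℚ) * Nat.card H := by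
    exact_mod_cast Subgroup.card_eq_card_quotient_mul_card_subgroup H
  have h1 : (0:ℚ) < (Nat.card (G ⧸ H) : ℚ) := by exact_mod_cast Nat.card_pos
  have h2 : (0:ℚ) < (Nat.card H : ℚ) := by exact_mod_cast Nat.card_pos
  rw [div_mul_div_comm, hG]
  have hden : ((Nat.card (G ⧸ H) : ℚ) * Nat.card H) ^ 2 =
      (Nat.card H : ℚ) ^ 2 * (Nat.card (G ⧸ H) : ℚ) ^ 2 := by ring
  rw [hden]
  rw [div_le_div_iff_of_pos_right (mul_pos (pow_pos h2 2) (pow_pos h1 2))]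
  exact_mod_cast key
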